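/- Let S = (a_1,…,a_n) be a k-sequence whose greedy partition has m ≥ 2 blocks. Then there is a subsequence S* of S (with the inherited sign function) such that the greedy partition of S* also has m blocks, every block of the greedy partition of S* contains at most k+3 elements, the last block of the greedy partition of S* has exactly 2 elements, and every string of 2k+5 consecutive elements of S* contains both a positive (k+1)-element subset and a negative one. -/

import Mathlib

open Set

/-- `h` is an (affine) hyperplane in `ℝ^d`: the solution set of a nontrivial
linear equation `∑ i, u i * x i = c`. -/
def IsHyperplane {d : ℕ} (h : Set (Fin d → ℝ)) : Prop :=
  ∃ (u : Fin d → ℝ) (c : ℝ), u ≠ 0 ∧ h = {x | ∑ i, u i * x i = c}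

/-- A curve `γ` is `k`-crossing on the interval `I` if for every hyperplane `h`
the set `{t ∈ I : γ t ∈ h}` has at most `k` elements. -/
def CurveCrossing {d : ℕ} (k : ℕ) (I : Set ℝ) (γ : ℝ → (Fin d → ℝ)) : Prop :=
  ∀ h : Set (Fin d → ℝ), IsHyperplane h → {t | t ∈ I ∧ γ t ∈ h}.encard ≤ (k : ℕ∞)

/-- The polygonal path `p 0 p 1 ⋯ p (n-1)`, as a subset of `ℝ^d`
(the union of its edges). -/
def PathSet {d n : ℕ} (p : Fin n → (Fin d → ℝ)) : Set (Fin d → ℝ) :=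
  ⋃ (i : Fin n) (h : (i : ℕ) + 1 < n), segment ℝ (p i) (p ⟨(i : ℕ) + 1, h⟩)

/-- A polygonal path is `k`-crossing if every hyperplane containing no edge of the
path intersects the path in at most `k` points. -/
def PathCrossing {d n : ℕ} (k : ℕ) (p : Fin n → (Fin d → ℝ)) : Prop :=
  ∀ h : Set (Fin d → ℝ), IsHyperplane h →
    (∀ (i : Fin n) (hi : (i : ℕ) + 1 < n), ¬ segment ℝ (p i) (p ⟨(i : ℕ) + 1, hi⟩) ⊆ h) →
    (PathSet p ∩ h).encard ≤ (k : ℕ∞)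

/-- A point sequence in `ℝ^d` is in general position if every at most `d+1` of the
points are affinely independent. -/
def GeneralPosition {d n : ℕ} (p : Fin n → (Fin d → ℝ)) : Prop :=
  ∀ s : Finset (Fin n), s.card ≤ d + 1 → AffineIndependent ℝ (fun i : s => p i)

/-- The sign (orientation) of an ordered `(d+1)`-tuple of points of `ℝ^d`: the sign of
the determinant of the `(d+1) × (d+1)` matrix whose `j`-th column is `(1, q j)`. -/
noncomputable def otSign {d : ℕ} (q : Fin (d + 1) → (Fin d → ℝ)) : ℝ :=
  Real.sign (Matrix.det (Matrix.of fun i j : Fin (d + 1) =>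
    (Fin.cons (1 : ℝ) (q j) : Fin (d + 1) → ℝ) i))

/-- A point sequence is order-type homogeneous if all of its increasing-index
`(d+1)`-tuples have the same nonzero sign. -/
def OrderTypeHomogeneous {d n : ℕ} (p : Fin n → (Fin d → ℝ)) : Prop :=
  ∃ σ : ℝ, σ ≠ 0 ∧ ∀ f : Fin (d + 1) → Fin n, StrictMono f →
    otSign (fun j => p (f j)) = σ

/-- The sign of a `(d+1)`-element subset of the index set of a point sequence:
the sign of the corresponding increasing-index `(d+1)`-tuple (junk value `0` if the
set does not have `d+1` elements). -/
noncomputable def finsetSign {d n : ℕ} (p : Fin n → (Fin d → ℝ)) (s : Finset (Fin n)) : ℝ :=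
  if h : s.card = d + 1 then otSign (fun j => p ((s.orderIsoOfFin h) j : Fin n)) else 0

/-- A point sequence in `ℝ^d` is in super-general position if for each `1 ≤ k ≤ d` its
projection to the first `k` coordinates is in general position. -/
def SuperGeneralPosition {d n : ℕ} (p : Fin n → (Fin d → ℝ)) : Prop :=
  ∀ (k : ℕ), 1 ≤ k → ∀ (hk : k ≤ d),
    GeneralPosition (fun i => fun j : Fin k => p i (Fin.castLE hk j))

/-- A point sequence in `ℝ^d` is super-order-type homogeneous if for each `1 ≤ k ≤ d` its
projection to the first `k` coordinates is order-type homogeneous. -/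
def SuperOrderTypeHomogeneous {d n : ℕ} (p : Fin n → (Fin d → ℝ)) : Prop :=
  ∀ (k : ℕ), 1 ≤ k → ∀ (hk : k ≤ d),
    OrderTypeHomogeneous (fun i => fun j : Fin k => p i (Fin.castLE hk j))

/-- `OTNum d n` is the smallest `N` such that every sequence of `N` points in general
position in `ℝ^d` contains an order-type homogeneous subsequence of length `n`. -/
noncomputable def OTNum (d n : ℕ) : ℕ :=
  sInf {N : ℕ | ∀ p : Fin N → (Fin d → ℝ), GeneralPosition p →
    ∃ f : Fin n → Fin N, StrictMono f ∧ OrderTypeHomogeneous (fun i => p (f i))}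

/-- `COTNum d n` is the smallest `N` such that every sequence of `N` points in
super-general position in `ℝ^d` contains a super-order-type homogeneous subsequence
of length `n`. -/
noncomputable def COTNum (d n : ℕ) : ℕ :=
  sInf {N : ℕ | ∀ p : Fin N → (Fin d → ℝ), SuperGeneralPosition p →
    ∃ f : Fin n → Fin N, StrictMono f ∧ SuperOrderTypeHomogeneous (fun i => p (f i))}

/-- The tower function: `twr 1 x = x` and `twr (i+1) x = 2 ^ twr i x`. -/
def twr (k x : ℕ) : ℕ := (fun y => 2 ^ y)^[k - 1] x

/-- `t` is an `ε`-sample of the interval `[a, b]`: an increasing tuple of points of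
`[a, b]` meeting every subinterval of `[a, b]` of length `ε`. -/
def IsEpsSample (a b ε : ℝ) {n : ℕ} (t : Fin n → ℝ) : Prop :=
  StrictMono t ∧ (∀ i, t i ∈ Set.Icc a b) ∧
    ∀ x : ℝ, Set.Icc x (x + ε) ⊆ Set.Icc a b → ∃ i, t i ∈ Set.Icc x (x + ε)

/-- All `(k+1)`-element subsets of the index interval `[a, b]` have the same sign. -/
def IntervalHomog {n : ℕ} (k : ℕ) (sgn : Finset (Fin n) → Bool) (a b : Fin n) : Prop :=
  ∃ σ : Bool, ∀ s : Finset (Fin n), s.card = k + 1 → (∀ i ∈ s, a ≤ i ∧ i ≤ b) → sgn s = σ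

/-- `c 0 = 0 < c 1 < ⋯ < c m = n - 1` are the cut points of the greedy partition of the
`k`-sequence on `Fin n` with sign function `sgn` into the `m` blocks
`[c 0, c 1], [c 1, c 2], …, [c (m-1), c m]` (consecutive blocks overlap in one point):
each block has all its `(k+1)`-element subsets of the same sign, and each block is
maximal with this property (cannot be extended to the right). -/
def IsGreedyPartition {n : ℕ} (k : ℕ) (sgn : Finset (Fin n) → Bool) (m : ℕ)
    (c : Fin (m + 1) → Fin n) : Prop :=
  (c 0 : ℕ) = 0 ∧ (c (Fin.last m) : ℕ) = n - 1 ∧ StrictMono c ∧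
    (∀ j : Fin m, IntervalHomog k sgn (c j.castSucc) (c j.succ)) ∧
    (∀ j : Fin m, ∀ e : Fin n, c j.succ < e → ¬ IntervalHomog k sgn (c j.castSucc) e)

/-- A `k`-sequence is a flip `k`-sequence if for every `k`-element subset `A` of indices
the sign sequence `(sgn (insert i A) : i ∉ A)` (indices in increasing order) has at most
one sign change; for `±`-valued sequences this says there are no positions `i < j < l`
with `sgn (insert i A) ≠ sgn (insert j A)` and `sgn (insert j A) ≠ sgn (insert l A)`. -/
def FlipSeq {n : ℕ} (k : ℕ) (sgn : Finset (Fin n) → Bool) : Prop :=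
  ∀ A : Finset (Fin n), A.card = k →
    ¬ ∃ i j l : Fin n, i < j ∧ j < l ∧ i ∉ A ∧ j ∉ A ∧ l ∉ A ∧
      sgn (insert i A) ≠ sgn (insert j A) ∧ sgn (insert j A) ≠ sgn (insert l A)

/-- Every `k`-sequence whose greedy partition has `m ≥ 2` blocks has a
subsequence (with the inherited sign function) whose greedy partition also has `m` blocks,
all of whose blocks have at most `k+3` elements, whose last block has exactly `2` elements,
and in which every string of `2k+5` consecutive elements contains both a positive and a
negative `(k+1)`-element subset. -/
lemma homog_of_small {n k : ℕ} (sgn : Finset (Fin n) → Bool) (a b : Fin n)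
    (h : (Finset.Icc a b).card ≤ k + 1) : IntervalHomog k sgn a b := by
  refine ⟨sgn (Finset.Icc a b), fun s hcard hmem => ?_⟩
  have hsub : s ⊆ Finset.Icc a b := fun i hi => Finset.mem_Icc.mpr (hmem i hi)
  have hs : s = Finset.Icc a b :=
    Finset.eq_of_subset_of_card_le hsub (by omega)
  rw [hs]

lemma exists_gadget {n k : ℕ} (sgn : Finset (Fin n) → Bool) (a b e : Fin n) (σ : Bool)
    (hhom : ∀ s : Finset (Fin n), s.card = k + 1 → (∀ i ∈ s, a ≤ i ∧ i ≤ b) → sgn s = σ)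
    (hab : a ≤ b) (he : (e : ℕ) = (b : ℕ) + 1)
    (hmax : ¬ IntervalHomog k sgn a e) :
    ∃ P T : Finset (Fin n), P.card = k + 1 ∧ (∀ i ∈ P, a ≤ i ∧ i ≤ b) ∧ b ∈ P ∧
      sgn P = σ ∧ T ⊆ insert e P ∧ T.card = k + 1 ∧ sgn T = !σ := by
  classical
  have hcard_ab : k + 1 ≤ (Finset.Icc a b).card := by
    by_contra hcon
    apply hmax
    apply homog_of_small
    rw [Fin.card_Icc] at *
    have hab' : (a : ℕ) ≤ b := hab
    omega
  rw [IntervalHomog] at hmax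
  push_neg at hmax
  obtain ⟨T, hTcard, hTmem, hTsgn⟩ := hmax σ
  have heT : e ∈ T := by
    by_contra heT
    apply hTsgn
    apply hhom T hTcard
    intro i hi
    refine ⟨(hTmem i hi).1, ?_⟩
    have h1 : (i : ℕ) ≤ e := (hTmem i hi).2
    have h2 : (i : ℕ) ≠ e := fun hh => heT (by rw [← Fin.ext hh]; exact hi)
    have : (i : ℕ) ≤ b := by omega
    exact this
  set base := T.erase e with hbase
  have hbase_card : base.card = k := by
    rw [hbase, Finset.card_erase_of_mem heT, hTcard]; omega
  have hbase_mem : ∀ i ∈ base, a ≤ i ∧ i ≤ b := by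
    intro i hi
    have h1 := hTmem i (Finset.mem_of_mem_erase hi)
    have h2 : (i : ℕ) ≠ e := fun hh => (Finset.ne_of_mem_erase hi) (Fin.ext hh)
    have h3 : (i : ℕ) ≤ e := h1.2
    exact ⟨h1.1, show (i:ℕ) ≤ b by omega⟩
  have hx : ∃ x, (a ≤ x ∧ x ≤ b) ∧ x ∉ base ∧ b ∈ insert x base := by
    by_cases hb : b ∈ base
    · have hns : ¬ Finset.Icc a b ⊆ base := by
        intro hss
        have := Finset.card_le_card hss
        omega
      obtain ⟨x, hx1, hx2⟩ := Finset.not_subset.mp hns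
      exact ⟨x, Finset.mem_Icc.mp hx1, hx2, Finset.mem_insert_of_mem hb⟩
    · exact ⟨b, ⟨hab, le_refl b⟩, hb, Finset.mem_insert_self _ _⟩
  obtain ⟨x, hxab, hxbase, hbP⟩ := hx
  refine ⟨insert x base, T, ?_, ?_, hbP, ?_, ?_, hTcard, ?_⟩
  · rw [Finset.card_insert_of_notMem hxbase, hbase_card]
  · intro i hi
    rcases Finset.mem_insert.mp hi with h | h
    · rw [h]; exact hxab
    · exact hbase_mem i h
  · apply hhom
    · rw [Finset.card_insert_of_notMem hxbase, hbase_card]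
    · intro i hi
      rcases Finset.mem_insert.mp hi with h | h
      · rw [h]; exact hxab
      · exact hbase_mem i h
  · intro i hi
    by_cases hie : i = e
    · rw [hie]; exact Finset.mem_insert_self _ _
    · exact Finset.mem_insert_of_mem (Finset.mem_insert_of_mem
        (Finset.mem_erase.mpr ⟨hie, hi⟩))
  · revert hTsgn; cases hh : sgn T <;> cases σ <;> simp

/-- Every `k`-sequence whose greedy partition has `m ≥ 2` blocks has a
subsequence (with the inherited sign function) whose greedy partition also has `m` blocks,
all of whose blocks have at most `k+3` elements, whose last block has exactly `2` elements,
and in which every string of `2k+5` consecutive elements contains both a positive and a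
negative `(k+1)`-element subset. -/
theorem reduced_k_sequence :
    ∀ (k n m : ℕ) (sgn : Finset (Fin n) → Bool) (c : Fin (m + 1) → Fin n),
      2 ≤ m → IsGreedyPartition k sgn m c →
      ∃ (n' : ℕ) (g : Fin n' → Fin n), StrictMono g ∧
        ∃ c' : Fin (m + 1) → Fin n',
          IsGreedyPartition k (fun s => sgn (s.image g)) m c' ∧
          (∀ j : Fin m, (c' j.succ : ℕ) - (c' j.castSucc : ℕ) + 1 ≤ k + 3) ∧
          (∀ j : Fin m, (j : ℕ) = m - 1 → (c' j.succ : ℕ) = (c' j.castSucc : ℕ) + 1) ∧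
          (∀ a : Fin n', (a : ℕ) + (2 * k + 5) ≤ n' →
            ∃ s t : Finset (Fin n'), s.card = k + 1 ∧ t.card = k + 1 ∧
              (∀ i ∈ s, a ≤ i ∧ (i : ℕ) ≤ (a : ℕ) + (2 * k + 4)) ∧
              (∀ i ∈ t, a ≤ i ∧ (i : ℕ) ≤ (a : ℕ) + (2 * k + 4)) ∧
              sgn (s.image g) = true ∧ sgn (t.image g) = false) := by
  classical
  intro k n m sgn c hm hgp
  obtain ⟨hc0, hclast, hcmono, hhomog, hmaximal⟩ := hgp
  choose σ hσ using hhomog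
  have hn : 0 < n := (c 0).pos
  -- bound for `E j` values
  have hBlt : ∀ j : Fin m, (j : ℕ) < m - 1 → (c j.succ : ℕ) + 1 < n := by
    intro j hj
    have h1 : j.succ < Fin.last m := by
      rw [Fin.lt_def]
      simp only [Fin.val_succ, Fin.val_last]
      omega
    have h2 := hcmono h1
    rw [Fin.lt_def, hclast] at h2
    omega
  obtain ⟨E, hE⟩ : ∃ E : Fin m → Fin n,
      ∀ j : Fin m, (j : ℕ) < m - 1 → (E j : ℕ) = (c j.succ : ℕ) + 1 := by
    refine ⟨fun j => if h : (c j.succ : ℕ) + 1 < n then ⟨(c j.succ : ℕ) + 1, h⟩ else c j.succ,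
      fun j hj => ?_⟩
    simp only [dif_pos (hBlt j hj)]
  -- gadgets
  have hgad : ∀ j : Fin m, ∃ P T : Finset (Fin n), (j : ℕ) < m - 1 →
      P.card = k + 1 ∧ (∀ i ∈ P, c j.castSucc ≤ i ∧ i ≤ c j.succ) ∧ c j.succ ∈ P ∧
      sgn P = σ j ∧ T ⊆ insert (E j) P ∧ T.card = k + 1 ∧ sgn T = !(σ j) := by
    intro j
    by_cases hj : (j : ℕ) < m - 1
    · obtain ⟨P, T, h⟩ := exists_gadget sgn (c j.castSucc) (c j.succ) (E j) (σ j) (hσ j)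
        (hcmono (Fin.castSucc_lt_succ (i := j))).le (hE j hj)
        (hmaximal j (E j) (by rw [Fin.lt_def, hE j hj]; omega))
      exact ⟨P, T, fun _ => h⟩
    · exact ⟨∅, ∅, fun h => absurd h hj⟩
  choose P T hPT using hgad
  -- the ground set of the subsequence
  set G : Finset (Fin n) :=
    insert (c 0) (Finset.univ.biUnion fun j : Fin m =>
      if (j : ℕ) < m - 1 then insert (E j) (P j) else ∅) with hGdef
  have hG_c0 : c 0 ∈ G := Finset.mem_insert_self _ _
  have hG_gad : ∀ j : Fin m, (j : ℕ) < m - 1 → insert (E j) (P j) ⊆ G := by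
    intro j hj w hw
    exact Finset.mem_insert_of_mem (Finset.mem_biUnion.mpr
      ⟨j, Finset.mem_univ j, by rw [if_pos hj]; exact hw⟩)
  have hG_cases : ∀ w ∈ G, w = c 0 ∨ ∃ j : Fin m, (j : ℕ) < m - 1 ∧ (w = E j ∨ w ∈ P j) := by
    intro w hw
    rcases Finset.mem_insert.mp hw with h | h
    · exact Or.inl h
    · right
      obtain ⟨j, _, hj2⟩ := Finset.mem_biUnion.mp h
      by_cases hj : (j : ℕ) < m - 1
      · rw [if_pos hj] at hj2
        exact ⟨j, hj, Finset.mem_insert.mp hj2⟩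
      · rw [if_neg hj] at hj2
        exact absurd hj2 (Finset.notMem_empty w)
  -- top gadget index
  set jt : Fin m := ⟨m - 2, by omega⟩ with hjt_def
  have hjt : (jt : ℕ) < m - 1 := by simp only [hjt_def]; omega
  have hG_Et : E jt ∈ G := hG_gad jt hjt (Finset.mem_insert_self _ _)
  have hG_ub : ∀ w ∈ G, (w : ℕ) ≤ (E jt : ℕ) := by
    intro w hw
    have hEt : (E jt : ℕ) = (c jt.succ : ℕ) + 1 := hE jt hjt
    rcases hG_cases w hw with h | ⟨j, hj, hcase⟩
    · rw [h, hc0]; omega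
    · have hBj : (c j.succ : ℕ) ≤ (c jt.succ : ℕ) := by
        have : j.succ ≤ jt.succ := Fin.succ_le_succ_iff.mpr (by
          rw [Fin.le_def]; simp only [hjt_def]; omega)
        exact hcmono.monotone this
      rcases hcase with h | h
      · rw [h, hE j hj]; omega
      · have := ((hPT j hj).2.1 w h).2
        rw [Fin.le_def] at this
        omega
  -- subsequence
  set n' := G.card with hn'def
  have hn'pos : 0 < n' := Finset.card_pos.mpr ⟨c 0, hG_c0⟩
  set ι := G.orderIsoOfFin hn'def.symm with hι
  set g : Fin n' → Fin n := fun i => (ι i : Fin n) with hg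
  have hg_mono : StrictMono g := fun i j h => Subtype.coe_lt_coe.mpr (ι.strictMono h)
  have hg_mem : ∀ i, g i ∈ G := fun i => (ι i).2
  have hgsymm : ∀ (w : Fin n) (hw : w ∈ G), g (ι.symm ⟨w, hw⟩) = w := by
    intro w hw
    simp only [hg, OrderIso.apply_symm_apply]
  have key1 : ∀ (w : Fin n) (hw : w ∈ G) (i : Fin n'), ι.symm ⟨w, hw⟩ ≤ i ↔ w ≤ g i := by
    intro w hw i
    rw [← hg_mono.le_iff_le, hgsymm w hw]
  have key2 : ∀ (w : Fin n) (hw : w ∈ G) (i : Fin n'), i ≤ ι.symm ⟨w, hw⟩ ↔ g i ≤ w := by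
    intro w hw i
    rw [← hg_mono.le_iff_le, hgsymm w hw]
  -- membership of cut points
  have hc_mem : ∀ j : Fin (m + 1), (j : ℕ) < m → c j ∈ G := by
    intro j hj
    by_cases h0 : (j : ℕ) = 0
    · have : j = 0 := Fin.ext h0
      rw [this]; exact hG_c0
    · set j' : Fin m := ⟨(j : ℕ) - 1, by omega⟩ with hj'def
      have hj' : (j' : ℕ) < m - 1 := by simp only [hj'def]; omega
      have hsucc : j'.succ = j := by
        apply Fin.ext; simp only [Fin.val_succ, hj'def]; omega
      have hmem := (hPT j' hj').2.2.1
      rw [hsucc] at hmem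
      exact hG_gad j' hj' (Finset.mem_insert_of_mem hmem)
  -- the new cut points
  set c' : Fin (m + 1) → Fin n' := fun j =>
    if h : (j : ℕ) < m then ι.symm ⟨c j, hc_mem j h⟩ else ι.symm ⟨E jt, hG_Et⟩ with hc'def
  have hc'lt : ∀ (j : Fin (m + 1)) (h : (j : ℕ) < m), c' j = ι.symm ⟨c j, hc_mem j h⟩ := by
    intro j h; simp only [hc'def, dif_pos h]
  have hc'last : ∀ (j : Fin (m + 1)), ¬ ((j : ℕ) < m) → c' j = ι.symm ⟨E jt, hG_Et⟩ := by
    intro j h; simp only [hc'def, dif_neg h]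
  -- consecutive elements of G have consecutive positions
  have hconsec : ∀ (u v : Fin n) (hu : u ∈ G) (hv : v ∈ G), (v : ℕ) = (u : ℕ) + 1 →
      (ι.symm ⟨v, hv⟩ : ℕ) = (ι.symm ⟨u, hu⟩ : ℕ) + 1 := by
    intro u v hu hv huv
    set p := ι.symm ⟨u, hu⟩ with hp
    set q := ι.symm ⟨v, hv⟩ with hq
    have hpq : p < q := by
      have hle : p ≤ q := (key1 u hu q).mpr (by rw [hgsymm v hv, Fin.le_def]; omega)
      have hne : p ≠ q := by
        intro hh
        have : g p = g q := by rw [hh]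
        rw [hp, hq, hgsymm, hgsymm] at this
        rw [this] at huv
        omega
      exact lt_of_le_of_ne hle hne
    by_contra hne
    have h1 : (p : ℕ) + 1 < (q : ℕ) := by
      have := Fin.lt_def.mp hpq
      omega
    set r : Fin n' := ⟨(p : ℕ) + 1, by have := q.isLt; omega⟩ with hr
    have hrval : (r : ℕ) = (p : ℕ) + 1 := rfl
    have h2 : g p < g r := hg_mono (by rw [Fin.lt_def, hrval]; omega)
    have h3 : g r < g q := hg_mono (by rw [Fin.lt_def, hrval]; omega)
    rw [hp, hgsymm] at h2
    rw [hq, hgsymm] at h3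
    rw [Fin.lt_def] at h2 h3
    omega
  -- counting elements in a block
  have hcount : ∀ (u v : Fin n) (hu : u ∈ G) (hv : v ∈ G), u ≤ v →
      (ι.symm ⟨v, hv⟩ : ℕ) + 1 - (ι.symm ⟨u, hu⟩ : ℕ) =
        (G.filter (fun w => u ≤ w ∧ w ≤ v)).card := by
    intro u v hu hv huv
    set p := ι.symm ⟨u, hu⟩ with hp
    set q := ι.symm ⟨v, hv⟩ with hq
    have himg : (Finset.Icc p q).image g = G.filter (fun w => u ≤ w ∧ w ≤ v) := by
      ext w
      simp only [Finset.mem_image, Finset.mem_filter, Finset.mem_Icc]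
      constructor
      · rintro ⟨i, ⟨h1, h2⟩, rfl⟩
        exact ⟨hg_mem i, (key1 u hu i).mp h1, (key2 v hv i).mp h2⟩
      · rintro ⟨hwG, h1, h2⟩
        refine ⟨ι.symm ⟨w, hwG⟩, ⟨?_, ?_⟩, hgsymm w hwG⟩
        · rw [hp, key1 u hu, hgsymm w hwG]; exact h1
        · rw [hq, key2 v hv, hgsymm w hwG]; exact h2
    rw [← himg, Finset.card_image_of_injective _ hg_mono.injective, Fin.card_Icc]
  -- value comparisons
  have hcv : ∀ j1 j2 : Fin (m + 1), (j1 : ℕ) ≤ (j2 : ℕ) → (c j1 : ℕ) ≤ (c j2 : ℕ) :=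
    fun j1 j2 h => Fin.le_def.mp (hcmono.monotone (Fin.le_def.mpr h))
  have hcs : ∀ j1 j2 : Fin (m + 1), (j1 : ℕ) < (j2 : ℕ) → (c j1 : ℕ) < (c j2 : ℕ) :=
    fun j1 j2 h => Fin.lt_def.mp (hcmono (Fin.lt_def.mpr h))
  have hgad_bounds : ∀ (i : Fin m), (i : ℕ) < m - 1 → ∀ w : Fin n, (w = E i ∨ w ∈ P i) →
      (c i.castSucc : ℕ) ≤ (w : ℕ) ∧ (w : ℕ) ≤ (c i.succ : ℕ) + 1 := by
    intro i hi w hw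
    rcases hw with h | h
    · rw [h, hE i hi]
      have := hcv i.castSucc i.succ (by simp only [Fin.val_succ, Fin.coe_castSucc]; omega)
      omega
    · have h1 := (hPT i hi).2.1 w h
      have h2 := Fin.le_def.mp h1.1
      have h3 := Fin.le_def.mp h1.2
      omega
  -- block content bound
  have hFcard : ∀ j : Fin m, (j : ℕ) < m - 1 →
      (G.filter (fun w => c j.castSucc ≤ w ∧ w ≤ c j.succ)).card ≤ k + 3 := by
    intro j hj
    have hPcard := (hPT j hj).1
    have hPsucc := (hPT j hj).2.2.1
    by_cases hj0 : (j : ℕ) = 0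
    · have hsub : G.filter (fun w => c j.castSucc ≤ w ∧ w ≤ c j.succ) ⊆
          insert (c j.castSucc) (P j) := by
        intro w hw
        obtain ⟨hwG, hw1, hw2⟩ := Finset.mem_filter.mp hw
        have hw1' := Fin.le_def.mp hw1
        have hw2' := Fin.le_def.mp hw2
        rcases hG_cases w hwG with h | ⟨i, hi, hcase⟩
        · have hcc : c j.castSucc = c 0 := by
            congr 1
            apply Fin.ext
            simp [hj0]
          rw [h, ← hcc]
          exact Finset.mem_insert_self _ _
        · have hib := hgad_bounds i hi w hcase
          rcases Nat.lt_or_ge (j : ℕ) (i : ℕ) with h' | h'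
          · -- i > j : w = c j.succ ∈ P j
            have : (c i.castSucc : ℕ) ≥ (c j.succ : ℕ) :=
              hcv j.succ i.castSucc (by simp only [Fin.val_succ, Fin.coe_castSucc]; omega)
            have hwe : w = c j.succ := Fin.ext (by omega)
            rw [hwe]
            exact Finset.mem_insert_of_mem hPsucc
          · -- i = j (since j = 0 ≤ i)
            have hij : i = j := Fin.ext (by omega)
            rcases hcase with h | h
            · exfalso
              rw [hij] at h
              rw [h, hE j hj] at hw2'
              omega
            · rw [hij] at h
              exact Finset.mem_insert_of_mem h
      calc (G.filter (fun w => c j.castSucc ≤ w ∧ w ≤ c j.succ)).card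
          ≤ (insert (c j.castSucc) (P j)).card := Finset.card_le_card hsub
        _ ≤ (P j).card + 1 := Finset.card_insert_le _ _
        _ ≤ k + 3 := by omega
    · set j' : Fin m := ⟨(j : ℕ) - 1, by omega⟩ with hj'def
      have hj' : (j' : ℕ) < m - 1 := by simp only [hj'def]; omega
      have hj'val : (j' : ℕ) = (j : ℕ) - 1 := rfl
      have hEj' : (E j' : ℕ) = (c j'.succ : ℕ) + 1 := hE j' hj'
      have hj'succ : (c j'.succ : ℕ) = (c j.castSucc : ℕ) := by
        congr 2
        apply Fin.ext
        simp only [Fin.val_succ, Fin.coe_castSucc, hj'val]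
        omega
      have hsub : G.filter (fun w => c j.castSucc ≤ w ∧ w ≤ c j.succ) ⊆
          insert (c j.castSucc) (insert (E j') (P j)) := by
        intro w hw
        obtain ⟨hwG, hw1, hw2⟩ := Finset.mem_filter.mp hw
        have hw1' := Fin.le_def.mp hw1
        have hw2' := Fin.le_def.mp hw2
        rcases hG_cases w hwG with h | ⟨i, hi, hcase⟩
        · exfalso
          have : (c 0 : ℕ) < (c j.castSucc : ℕ) := hcs 0 j.castSucc (by
            simp only [Fin.coe_castSucc, Fin.val_zero]
            omega)
          rw [h] at hw1'
          omega
        · have hib := hgad_bounds i hi w hcase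
          rcases Nat.lt_or_ge (j : ℕ) (i : ℕ) with h' | h'
          · have : (c i.castSucc : ℕ) ≥ (c j.succ : ℕ) :=
              hcv j.succ i.castSucc (by simp only [Fin.val_succ, Fin.coe_castSucc]; omega)
            have hwe : w = c j.succ := Fin.ext (by omega)
            rw [hwe]
            exact Finset.mem_insert_of_mem (Finset.mem_insert_of_mem hPsucc)
          · rcases Nat.lt_or_ge (i : ℕ) ((j : ℕ) - 1) with h'' | h''
            · -- i + 1 < j : w = c j.castSucc
              have : (c i.succ : ℕ) < (c j.castSucc : ℕ) :=
                hcs i.succ j.castSucc (by simp only [Fin.val_succ, Fin.coe_castSucc]; omega)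
              have hwe : w = c j.castSucc := Fin.ext (by omega)
              rw [hwe]
              exact Finset.mem_insert_self _ _
            · rcases Nat.eq_or_lt_of_le h'' with h3 | h3
              · -- i = j - 1 = j'
                have hij : i = j' := Fin.ext (by omega)
                rw [hij] at hib
                have : (w : ℕ) = (c j.castSucc : ℕ) ∨ (w : ℕ) = (E j' : ℕ) := by omega
                rcases this with hh | hh
                · have hwe : w = c j.castSucc := Fin.ext hh
                  rw [hwe]; exact Finset.mem_insert_self _ _
                · have hwe : w = E j' := Fin.ext hh
                  rw [hwe]
                  exact Finset.mem_insert_of_mem (Finset.mem_insert_self _ _)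
              · -- i = j
                have hij : i = j := Fin.ext (by omega)
                rcases hcase with h | h
                · exfalso
                  rw [hij] at h
                  rw [h, hE j hj] at hw2'
                  omega
                · rw [hij] at h
                  exact Finset.mem_insert_of_mem (Finset.mem_insert_of_mem h)
      calc (G.filter (fun w => c j.castSucc ≤ w ∧ w ≤ c j.succ)).card
          ≤ (insert (c j.castSucc) (insert (E j') (P j))).card := Finset.card_le_card hsub
        _ ≤ (insert (E j') (P j)).card + 1 := Finset.card_insert_le _ _
        _ ≤ (P j).card + 1 + 1 := by
            have := Finset.card_insert_le (E j') (P j)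
            omega
        _ ≤ k + 3 := by omega
  -- preimage helper
  have hpre : ∀ Q : Finset (Fin n), Q ⊆ G →
      ((Finset.univ.filter (fun i : Fin n' => g i ∈ Q)).image g = Q ∧
       (Finset.univ.filter (fun i : Fin n' => g i ∈ Q)).card = Q.card) := by
    intro Q hQ
    have h1 : (Finset.univ.filter (fun i : Fin n' => g i ∈ Q)).image g = Q := by
      ext w
      simp only [Finset.mem_image, Finset.mem_filter, Finset.mem_univ, true_and]
      constructor
      · rintro ⟨i, hi, rfl⟩; exact hi
      · intro hw
        exact ⟨ι.symm ⟨w, hQ hw⟩, by rw [hgsymm]; exact hw, hgsymm w (hQ hw)⟩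
    refine ⟨h1, ?_⟩
    conv_rhs => rw [← h1]
    exact (Finset.card_image_of_injective _ hg_mono.injective).symm
  -- position of the minimum and maximum
  have hposzero : ∀ (w : Fin n) (hw : w ∈ G), (w : ℕ) = 0 → (ι.symm ⟨w, hw⟩ : ℕ) = 0 := by
    intro w hw hw0
    by_contra hne
    have hpos : 0 < (ι.symm ⟨w, hw⟩ : ℕ) := Nat.pos_of_ne_zero hne
    set z : Fin n' := ⟨0, hn'pos⟩ with hz
    have hzval : (z : ℕ) = 0 := rfl
    have h2 : g z < g (ι.symm ⟨w, hw⟩) := hg_mono (Fin.lt_def.mpr (by omega))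
    rw [hgsymm] at h2
    have := Fin.lt_def.mp h2
    omega
  have hposlast : ∀ (w : Fin n) (hw : w ∈ G), (∀ u ∈ G, (u : ℕ) ≤ (w : ℕ)) →
      (ι.symm ⟨w, hw⟩ : ℕ) = n' - 1 := by
    intro w hw hub
    have hle : ∀ i : Fin n', i ≤ ι.symm ⟨w, hw⟩ := by
      intro i
      exact (key2 w hw i).mpr (Fin.le_def.mpr (hub (g i) (hg_mem i)))
    have h1 := Fin.le_def.mp (hle ⟨n' - 1, by omega⟩)
    have h2 : ((⟨n' - 1, by omega⟩ : Fin n') : ℕ) = n' - 1 := rfl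
    have h3 := (ι.symm ⟨w, hw⟩).isLt
    omega
  -- greedy partition components
  have hcomp1 : (c' 0 : ℕ) = 0 := by
    rw [hc'lt 0 (by simp only [Fin.val_zero]; omega)]
    exact hposzero _ _ hc0
  have hcomp2 : (c' (Fin.last m) : ℕ) = n' - 1 := by
    rw [hc'last _ (by simp only [Fin.val_last]; omega)]
    exact hposlast _ _ hG_ub
  have hcastlt : ∀ j : Fin m, ((j.castSucc : Fin (m + 1)) : ℕ) < m := fun j => by
    simp only [Fin.coe_castSucc]; exact j.isLt
  have hsucclt : ∀ j : Fin m, (j : ℕ) < m - 1 → ((j.succ : Fin (m + 1)) : ℕ) < m := by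
    intro j hj; simp only [Fin.val_succ]; omega
  have hstep : ∀ j : Fin m, (j : ℕ) < m - 1 →
      (c' j.castSucc : ℕ) ≤ (c' j.succ : ℕ) ∧
      (c' j.succ : ℕ) + 1 - (c' j.castSucc : ℕ) ≤ k + 3 := by
    intro j hj
    rw [hc'lt j.castSucc (hcastlt j), hc'lt j.succ (hsucclt j hj)]
    have hle : c j.castSucc ≤ c j.succ := (hcmono (Fin.castSucc_lt_succ (i := j))).le
    have h1 := hcount _ _ (hc_mem _ (hcastlt j)) (hc_mem _ (hsucclt j hj)) hle
    have h2 := hFcard j hj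
    have h3 : ι.symm ⟨c j.castSucc, hc_mem _ (hcastlt j)⟩ ≤
        ι.symm ⟨c j.succ, hc_mem _ (hsucclt j hj)⟩ := by
      rw [key1, hgsymm]
      exact hle
    have h4 := Fin.le_def.mp h3
    exact ⟨h4, by omega⟩
  have hlaststep : ∀ j : Fin m, (j : ℕ) = m - 1 →
      (c' j.succ : ℕ) = (c' j.castSucc : ℕ) + 1 := by
    intro j hj
    have hsuccval : ((j.succ : Fin (m + 1)) : ℕ) = m := by
      simp only [Fin.val_succ]; omega
    rw [hc'last j.succ (by omega), hc'lt j.castSucc (hcastlt j)]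
    apply hconsec
    have h1 : (E jt : ℕ) = (c jt.succ : ℕ) + 1 := hE jt hjt
    have h2 : c jt.succ = c j.castSucc := by
      congr 1
      apply Fin.ext
      simp only [Fin.val_succ, Fin.coe_castSucc, hjt_def]
      omega
    rw [h1, h2]
  have hcomp3 : StrictMono c' := by
    rw [Fin.strictMono_iff_lt_succ]
    intro j
    by_cases hj : (j : ℕ) < m - 1
    · rw [hc'lt j.castSucc (hcastlt j), hc'lt j.succ (hsucclt j hj)]
      have hlt : c j.castSucc < c j.succ := hcmono (Fin.castSucc_lt_succ (i := j))
      exact (ι.symm).strictMono (Subtype.mk_lt_mk.mpr hlt)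
    · have hj' : (j : ℕ) = m - 1 := by have := j.isLt; omega
      have := hlaststep j hj'
      rw [Fin.lt_def]
      omega
  have hcomp4 : ∀ j : Fin m,
      IntervalHomog k (fun s => sgn (s.image g)) (c' j.castSucc) (c' j.succ) := by
    intro j
    refine ⟨σ j, fun s hcard hmem => ?_⟩
    apply hσ j
    · rw [Finset.card_image_of_injective _ hg_mono.injective]; exact hcard
    · intro w hw
      obtain ⟨i, hi, rfl⟩ := Finset.mem_image.mp hw
      obtain ⟨h1, h2⟩ := hmem i hi
      refine ⟨?_, ?_⟩
      · rw [hc'lt j.castSucc (hcastlt j)] at h1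
        exact (key1 _ _ i).mp h1
      · by_cases hj : (j : ℕ) < m - 1
        · rw [hc'lt j.succ (hsucclt j hj)] at h2
          exact (key2 _ _ i).mp h2
        · have hj' : (j : ℕ) = m - 1 := by have := j.isLt; omega
          have hsuccval : ((j.succ : Fin (m + 1)) : ℕ) = m := by
            simp only [Fin.val_succ]; omega
          rw [hc'last j.succ (by omega)] at h2
          have h4 : g i ≤ E jt := (key2 _ _ i).mp h2
          have h5 : (E jt : ℕ) ≤ (c j.succ : ℕ) := by
            rw [hE jt hjt]
            have h6 : (c jt.succ : ℕ) < (c j.succ : ℕ) := hcs jt.succ j.succ (by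
              simp only [Fin.val_succ, hjt_def]; omega)
            omega
          have h7 := Fin.le_def.mp h4
          exact Fin.le_def.mpr (by omega)
  have hcomp5 : ∀ j : Fin m, ∀ e : Fin n', c' j.succ < e →
      ¬ IntervalHomog k (fun s => sgn (s.image g)) (c' j.castSucc) e := by
    intro j e he
    by_cases hj : (j : ℕ) < m - 1
    · rintro ⟨τ, hτ⟩
      rw [hc'lt j.succ (hsucclt j hj)] at he
      have hge : (c j.succ : ℕ) < (g e : ℕ) := by
        have h1 : ¬ (e ≤ ι.symm ⟨c j.succ, hc_mem _ (hsucclt j hj)⟩) := not_le.mpr he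
        rw [key2] at h1
        exact Fin.lt_def.mp (not_le.mp h1)
      obtain ⟨hP1, hP2, hP3, hP4, hT1, hT2, hT3⟩ := hPT j hj
      have hPsub : P j ⊆ G := fun w hw => hG_gad j hj (Finset.mem_insert_of_mem hw)
      have hTsub : T j ⊆ G := fun w hw => hG_gad j hj (hT1 hw)
      have hpreP := hpre (P j) hPsub
      have hpreT := hpre (T j) hTsub
      have hmemP : ∀ i ∈ Finset.univ.filter (fun i : Fin n' => g i ∈ P j),
          c' j.castSucc ≤ i ∧ i ≤ e := by
        intro i hi
        have hgi : g i ∈ P j := (Finset.mem_filter.mp hi).2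
        refine ⟨?_, ?_⟩
        · rw [hc'lt j.castSucc (hcastlt j)]
          exact (key1 _ _ i).mpr (hP2 _ hgi).1
        · have h1 := Fin.le_def.mp (hP2 _ hgi).2
          exact (hg_mono.le_iff_le).mp (Fin.le_def.mpr (by omega))
      have hmemT : ∀ i ∈ Finset.univ.filter (fun i : Fin n' => g i ∈ T j),
          c' j.castSucc ≤ i ∧ i ≤ e := by
        intro i hi
        have hgi : g i ∈ T j := (Finset.mem_filter.mp hi).2
        have hb := hgad_bounds j hj (g i) (Finset.mem_insert.mp (hT1 hgi))
        refine ⟨?_, ?_⟩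
        · rw [hc'lt j.castSucc (hcastlt j)]
          exact (key1 _ _ i).mpr (Fin.le_def.mpr hb.1)
        · exact (hg_mono.le_iff_le).mp (Fin.le_def.mpr (by omega))
      have e1 : sgn ((Finset.univ.filter (fun i : Fin n' => g i ∈ P j)).image g) = τ :=
        hτ _ (by rw [hpreP.2]; exact hP1) hmemP
      have e2 : sgn ((Finset.univ.filter (fun i : Fin n' => g i ∈ T j)).image g) = τ :=
        hτ _ (by rw [hpreT.2]; exact hT2) hmemT
      rw [hpreP.1, hP4] at e1
      rw [hpreT.1, hT3] at e2
      rw [← e1] at e2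
      exact absurd e2 (by cases σ j <;> simp)
    · exfalso
      have hj' : (j : ℕ) = m - 1 := by have := j.isLt; omega
      have hsuccval : ((j.succ : Fin (m + 1)) : ℕ) = m := by
        simp only [Fin.val_succ]; omega
      rw [hc'last j.succ (by omega)] at he
      have h1 := Fin.lt_def.mp he
      have h2 : (ι.symm ⟨E jt, hG_Et⟩ : ℕ) = n' - 1 := hposlast _ _ hG_ub
      have h3 := e.isLt
      omega
  -- the position sequence as a function on ℕ
  set q : ℕ → ℕ := fun t => if h : t < m + 1 then (c' ⟨t, h⟩ : ℕ) else 0 with hqdef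
  have hq : ∀ j : Fin (m + 1), q (j : ℕ) = (c' j : ℕ) := by
    intro j
    simp only [hqdef, dif_pos j.isLt, Fin.eta]
  have hqm : q m = n' - 1 := by
    have h1 : ((Fin.last m : Fin (m + 1)) : ℕ) = m := Fin.val_last m
    rw [← h1, hq, hcomp2]
  have hq0 : q 0 = 0 := by
    have h1 := hq 0
    rw [Fin.val_zero, hcomp1] at h1
    exact h1
  set jm1 : Fin m := ⟨m - 1, by omega⟩ with hjm1def
  have hqm1 : q m = q (m - 1) + 1 := by
    have h1 : ((jm1.succ : Fin (m + 1)) : ℕ) = m := by simp only [Fin.val_succ, hjm1def]; omega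
    have h2 : ((jm1.castSucc : Fin (m + 1)) : ℕ) = m - 1 := by
      simp only [Fin.coe_castSucc, hjm1def]
    have e1 := hq jm1.succ
    rw [h1] at e1
    have e2 := hq jm1.castSucc
    rw [h2] at e2
    have e3 := hlaststep jm1 (by simp only [hjm1def])
    omega
  have hqstep : ∀ t : ℕ, t < m - 1 → q t ≤ q (t + 1) ∧ q (t + 1) ≤ q t + (k + 2) := by
    intro t ht
    set J : Fin m := ⟨t, by omega⟩ with hJdef
    have h1 : ((J.castSucc : Fin (m + 1)) : ℕ) = t := by simp only [Fin.coe_castSucc, hJdef]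
    have h2 : ((J.succ : Fin (m + 1)) : ℕ) = t + 1 := by simp only [Fin.val_succ, hJdef]
    have h3 := hstep J (by simp only [hJdef]; omega)
    have e1 := hq J.castSucc
    rw [h1] at e1
    have e2 := hq J.succ
    rw [h2] at e2
    omega
  -- finish
  refine ⟨n', g, hg_mono, c', ⟨hcomp1, hcomp2, hcomp3, hcomp4, hcomp5⟩, ?_, ?_, ?_⟩
  · -- block sizes
    intro j
    by_cases hj : (j : ℕ) < m - 1
    · have := hstep j hj
      omega
    · have hj' : (j : ℕ) = m - 1 := by have := j.isLt; omega
      have := hlaststep j hj'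
      omega
  · -- last block
    intro j hj
    exact hlaststep j hj
  · -- windows
    intro a ha
    have hq2 : (a : ℕ) ≤ q (m - 2) := by
      have hs := hqstep (m - 2) (by omega)
      rw [show m - 2 + 1 = m - 1 by omega] at hs
      omega
    obtain ⟨j0, hj0le, hj0a, hq_ub⟩ :
        ∃ t, t ≤ m - 2 ∧ (a : ℕ) ≤ q t ∧ q t ≤ (a : ℕ) + (k + 1) := by
      have hex : ∃ t, t ≤ m - 2 ∧ (a : ℕ) ≤ q t := ⟨m - 2, le_rfl, hq2⟩
      refine ⟨Nat.find hex, (Nat.find_spec hex).1, (Nat.find_spec hex).2, ?_⟩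
      rcases Nat.eq_zero_or_pos (Nat.find hex) with h0 | hpos
      · have hs2 := (Nat.find_spec hex).2
        rw [h0, hq0] at hs2
        rw [h0, hq0]
        omega
      · have hmin := Nat.find_min hex (show Nat.find hex - 1 < Nat.find hex by omega)
        have h5 : q (Nat.find hex - 1) < a := by
          by_contra hcon
          exact hmin ⟨by have := (Nat.find_spec hex).1; omega, by omega⟩
        have hs := hqstep (Nat.find hex - 1) (by have := (Nat.find_spec hex).1; omega)
        rw [show Nat.find hex - 1 + 1 = Nat.find hex by omega] at hs
        omega
    set J : Fin m := ⟨j0, by omega⟩ with hJdef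
    have hJ : (J : ℕ) < m - 1 := by simp only [hJdef]; omega
    obtain ⟨hP1, hP2, hP3, hP4, hT1, hT2, hT3⟩ := hPT J hJ
    have hc1 : ((J.castSucc : Fin (m + 1)) : ℕ) = j0 := by simp only [Fin.coe_castSucc, hJdef]
    have hc2 : ((J.succ : Fin (m + 1)) : ℕ) = j0 + 1 := by simp only [Fin.val_succ, hJdef]
    have hqJcast : q j0 = (c' J.castSucc : ℕ) := by rw [← hc1, hq]
    have hqJsucc : q (j0 + 1) = (c' J.succ : ℕ) := by rw [← hc2, hq]
    have hstepJ := hqstep j0 (by omega)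
    have hEmem : E J ∈ G := hG_gad J hJ (Finset.mem_insert_self _ _)
    have hposE : (ι.symm ⟨E J, hEmem⟩ : ℕ) = (c' J.succ : ℕ) + 1 := by
      rw [hc'lt J.succ (hsucclt J hJ)]
      exact hconsec _ _ _ _ (hE J hJ)
    have hposEub : (ι.symm ⟨E J, hEmem⟩ : ℕ) ≤ (a : ℕ) + (2 * k + 4) := by omega
    have hPsub : P J ⊆ G := fun w hw => hG_gad J hJ (Finset.mem_insert_of_mem hw)
    have hTsub : T J ⊆ G := fun w hw => hG_gad J hJ (hT1 hw)
    have hpreP := hpre (P J) hPsub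
    have hpreT := hpre (T J) hTsub
    have hmemP : ∀ i ∈ Finset.univ.filter (fun i : Fin n' => g i ∈ P J),
        a ≤ i ∧ (i : ℕ) ≤ (a : ℕ) + (2 * k + 4) := by
      intro i hi
      have hgi : g i ∈ P J := (Finset.mem_filter.mp hi).2
      have hlow : c' J.castSucc ≤ i := by
        rw [hc'lt J.castSucc (hcastlt J)]
        exact (key1 _ _ i).mpr (hP2 _ hgi).1
      have hlow' := Fin.le_def.mp hlow
      have hup : i ≤ ι.symm ⟨c J.succ, hc_mem _ (hsucclt J hJ)⟩ :=
        (key2 _ _ i).mpr (hP2 _ hgi).2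
      have hup' := Fin.le_def.mp hup
      have hceq : (ι.symm ⟨c J.succ, hc_mem _ (hsucclt J hJ)⟩ : ℕ) = (c' J.succ : ℕ) := by
        rw [hc'lt J.succ (hsucclt J hJ)]
      refine ⟨Fin.le_def.mpr (by omega), by omega⟩
    have hmemT : ∀ i ∈ Finset.univ.filter (fun i : Fin n' => g i ∈ T J),
        a ≤ i ∧ (i : ℕ) ≤ (a : ℕ) + (2 * k + 4) := by
      intro i hi
      have hgi : g i ∈ T J := (Finset.mem_filter.mp hi).2
      have hb := hgad_bounds J hJ (g i) (Finset.mem_insert.mp (hT1 hgi))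
      have hlow : c' J.castSucc ≤ i := by
        rw [hc'lt J.castSucc (hcastlt J)]
        exact (key1 _ _ i).mpr (Fin.le_def.mpr hb.1)
      have hlow' := Fin.le_def.mp hlow
      have hup : i ≤ ι.symm ⟨E J, hEmem⟩ := by
        refine (key2 _ _ i).mpr (Fin.le_def.mpr ?_)
        rw [hE J hJ]
        exact hb.2
      have hup' := Fin.le_def.mp hup
      refine ⟨Fin.le_def.mpr (by omega), by omega⟩
    have hsgnP : sgn ((Finset.univ.filter (fun i : Fin n' => g i ∈ P J)).image g) = σ J := by
      rw [hpreP.1]; exact hP4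
    have hsgnT : sgn ((Finset.univ.filter (fun i : Fin n' => g i ∈ T J)).image g) = !σ J := by
      rw [hpreT.1]; exact hT3
    have hcardP : (Finset.univ.filter (fun i : Fin n' => g i ∈ P J)).card = k + 1 := by
      rw [hpreP.2]; exact hP1
    have hcardT : (Finset.univ.filter (fun i : Fin n' => g i ∈ T J)).card = k + 1 := by
      rw [hpreT.2]; exact hT2
    cases hσJ : σ J with
    | true =>
        refine ⟨_, _, hcardP, hcardT, hmemP, hmemT, ?_, ?_⟩
        · rw [hsgnP, hσJ]
        · rw [hsgnT, hσJ]; rfl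
    | false =>
        refine ⟨_, _, hcardT, hcardP, hmemT, hmemP, ?_, ?_⟩
        · rw [hsgnT, hσJ]; rfl
        · rw [hsgnP, hσJ]
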